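/- Every terminal Petri net language is generated by a regular expression controlled by balanced semaphores: for every labelled place/transition Petri net Π over an alphabet Σ with initial marking M₀ and final marking M_f, there exist n ∈ ℕ and a regular expression E over Σ ∪ Ω_n, where Ω_n = {σ₁,…,σₙ, ω₁,…,ωₙ} is disjoint from Σ, such that T(Π, M₀, M_f) = { h(x) : x ∈ L(E) and h̄(x) ∈ C₀(n) }, where C₀(n) ⊆ Ω_n* is the [0]-counter semaphore language, h erases all Ω_n-symbols from a word, and h̄ erases all Σ-symbols. -/

import Mathlib

/-- A labelled place/transition Petri net with places `P`, transitions `T`, and labels in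
`A ∪ {λ}` (modelled by `Option A`, with `none` the silent label λ). -/
structure LabelledPetriNet (P T A : Type) where
  pre : T → P → ℕ
  post : T → P → ℕ
  label : T → Option A

namespace LabelledPetriNet

variable {P T A : Type}

/-- A transition `t` is enabled at marking `M` if every place holds enough marks. -/
def Enabled (N : LabelledPetriNet P T A) (M : P → ℕ) (t : T) : Prop :=
  ∀ p, N.pre t p ≤ M p

/-- Firing a transition `t` at marking `M`. -/
def fire (N : LabelledPetriNet P T A) (M : P → ℕ) (t : T) : P → ℕ :=
  fun p => M p - N.pre t p + N.post t p

/-- `N.FiringSeq M s M'` : the sequence of transitions `s` can be successively fired from the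
marking `M`, leading to the marking `M'`. -/
inductive FiringSeq (N : LabelledPetriNet P T A) : (P → ℕ) → List T → (P → ℕ) → Prop
  | nil (M : P → ℕ) : FiringSeq N M [] M
  | cons {M M' : P → ℕ} {t : T} {ts : List T} :
      N.Enabled M t → FiringSeq N (N.fire M t) ts M' → FiringSeq N M (t :: ts) M'

/-- The label word of a firing sequence: the labels of its transitions with the silent
labels deleted. -/
def labelWord (N : LabelledPetriNet P T A) (s : List T) : List A :=
  s.filterMap N.label

/-- The Petri net language `L(Π, M₀)`: label words of all firing sequences from `M₀`. -/
def lang (N : LabelledPetriNet P T A) (M₀ : P → ℕ) : Language A :=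
  { w | ∃ s M, N.FiringSeq M₀ s M ∧ N.labelWord s = w }

/-- The terminal Petri net language `T(Π, M₀, M_f)`: label words of all firing sequences
leading from `M₀` exactly to `M_f`. -/
def terminalLang (N : LabelledPetriNet P T A) (M₀ Mf : P → ℕ) : Language A :=
  { w | ∃ s, N.FiringSeq M₀ s Mf ∧ N.labelWord s = w }

end LabelledPetriNet


/-- The synchronization alphabet `Ω_n = {σ₁,…,σₙ, ω₁,…,ωₙ}`: the pair `(i, true)` is the
increment symbol `σᵢ` and `(i, false)` is the decrement symbol `ωᵢ`. -/
abbrev Omega (n : ℕ) : Type := Fin n × Bool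

/-- The `[0]`-counter semaphore language `C₀(n)`: words over `Ω_n` such that for every `i`,
every prefix contains at least as many `σᵢ`'s as `ωᵢ`'s, and the totals are equal. -/
def C0 (n : ℕ) : Language (Omega n) :=
  { v | ∀ i : Fin n,
      (∀ p, p <+: v → p.count (i, false) ≤ p.count (i, true)) ∧
      v.count (i, true) = v.count (i, false) }

/-- The homomorphism `h` erasing all `Ω_n`-symbols of a word over `Σ ∪ Ω_n`. -/
def eraseOmega {A : Type} {n : ℕ} (x : List (A ⊕ Omega n)) : List A :=
  x.filterMap Sum.getLeft?

/-- The homomorphism `h̄` erasing all `Σ`-symbols of a word over `Σ ∪ Ω_n`. -/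
def eraseSigma {A : Type} {n : ℕ} (x : List (A ⊕ Omega n)) : List (Omega n) :=
  x.filterMap Sum.getRight?


section Aux

open List

variable {α : Type}

lemma prefix_append_cases {p u v : List α} (h : p <+: u ++ v) :
    p <+: u ∨ ∃ q, q <+: v ∧ p = u ++ q := by
  induction u generalizing p with
  | nil => exact .inr ⟨p, by simpa using h, by simp⟩
  | cons a u ih =>
    match p with
    | [] => exact .inl (nil_prefix)
    | b :: p =>
      rw [cons_append, cons_prefix_cons] at h
      obtain ⟨rfl, h⟩ := h
      rcases ih h with h' | ⟨q, hq, rfl⟩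
      · exact .inl (cons_prefix_cons.2 ⟨rfl, h'⟩)
      · exact .inr ⟨q, hq, rfl⟩

/-- Regular expression matching exactly one word. -/
def rword : List α → RegularExpression α
  | [] => 1
  | a :: l => RegularExpression.char a * rword l

lemma mem_rword {w x : List α} : x ∈ (rword w).matches' ↔ x = w := by
  induction w generalizing x with
  | nil =>
    simp [rword, Language.mem_one]
  | cons a l ih =>
    simp only [rword, RegularExpression.matches'_mul, RegularExpression.matches'_char,
      Language.mem_mul, ih]
    constructor
    · rintro ⟨y, hy, z, rfl, rfl⟩
      replace hy : y = [a] := hy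
      subst hy; rfl
    · rintro rfl
      exact ⟨[a], rfl, l, rfl, rfl⟩

/-- Sum of a list of regular expressions. -/
def rsum : List (RegularExpression α) → RegularExpression α
  | [] => 0
  | r :: rs => r + rsum rs

lemma mem_rsum {rs : List (RegularExpression α)} {x : List α} :
    x ∈ (rsum rs).matches' ↔ ∃ r ∈ rs, x ∈ r.matches' := by
  induction rs with
  | nil => simp [rsum]
  | cons r rs ih =>
    simp only [rsum, RegularExpression.matches'_add, Language.mem_add, ih, List.mem_cons]
    constructor
    · rintro (h | ⟨r', hr', h⟩)
      · exact ⟨r, .inl rfl, h⟩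
      · exact ⟨r', .inr hr', h⟩
    · rintro ⟨r', (rfl | hr'), h⟩
      · exact .inl h
      · exact .inr ⟨r', hr', h⟩

lemma mem_big (u v : List α) (cs : List (List α)) (x : List α) :
    x ∈ (rword u * (rsum (cs.map rword)).star * rword v).matches' ↔
      ∃ L : List (List α), (∀ y ∈ L, y ∈ cs) ∧ x = u ++ L.flatten ++ v := by
  simp only [RegularExpression.matches'_mul, RegularExpression.matches'_star, Language.mem_mul]
  constructor
  · rintro ⟨y, ⟨y₁, hy₁, y₂, hy₂, rfl⟩, y₃, hy₃, rfl⟩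
    rw [mem_rword] at hy₁ hy₃
    subst hy₁; subst hy₃
    rw [Language.mem_kstar] at hy₂
    obtain ⟨L, rfl, hL⟩ := hy₂
    refine ⟨L, fun y hy => ?_, rfl⟩
    obtain ⟨r, hr, hyr⟩ := mem_rsum.1 (hL y hy)
    obtain ⟨c, hc, rfl⟩ := List.mem_map.1 hr
    rw [mem_rword] at hyr; subst hyr; exact hc
  · rintro ⟨L, hL, rfl⟩
    exact ⟨u ++ L.flatten, ⟨u, mem_rword.2 rfl, L.flatten,
      Language.join_mem_kstar (fun y hy =>
        mem_rsum.2 ⟨rword y, List.mem_map_of_mem (hL y hy), mem_rword.2 rfl⟩), rfl⟩,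
      v, mem_rword.2 rfl, rfl⟩

lemma exists_list_map {β : Type} {L : List α} {f : β → α} (h : ∀ y ∈ L, ∃ t, y = f t) :
    ∃ s : List β, L = s.map f := by
  induction L with
  | nil => exact ⟨[], rfl⟩
  | cons y L ih =>
    obtain ⟨t, rfl⟩ := h y (.head _)
    obtain ⟨s, rfl⟩ := ih (fun z hz => h z (.tail _ hz))
    exact ⟨t :: s, rfl⟩

end Aux

section Count

variable {n : ℕ}

/-- The word consisting of `g i` copies of `(i, b)` for each `i`. -/
def mword (g : Fin n → ℕ) (b : Bool) : List (Omega n) :=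
  ((List.finRange n).map fun i => List.replicate (g i) (i, b)).flatten

lemma count_mword (g : Fin n → ℕ) (b : Bool) (j : Fin n) (c : Bool) :
    (mword g b).count (j, c) = if c = b then g j else 0 := by
  rw [mword, List.count_flatten, List.map_map]
  have : ((List.finRange n).map (List.count (j, c) ∘ fun i => List.replicate (g i) (i, b))).sum
      = ∑ i : Fin n, List.count (j, c) (List.replicate (g i) (i, b)) := (Fin.sum_univ_def _).symm
  rw [this]
  simp only [List.count_replicate, Prod.mk.injEq]
  by_cases hcb : c = b
  · subst hcb
    simp
  · simp [hcb]
    exact fun hbc => absurd hbc.symm hcb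

@[simp] lemma count_mword_tt (g : Fin n → ℕ) (j : Fin n) :
    (mword g true).count (j, true) = g j := by simp [count_mword]

@[simp] lemma count_mword_ff (g : Fin n → ℕ) (j : Fin n) :
    (mword g false).count (j, false) = g j := by simp [count_mword]

@[simp] lemma count_mword_tf (g : Fin n → ℕ) (j : Fin n) :
    (mword g true).count (j, false) = 0 := by simp [count_mword]

@[simp] lemma count_mword_ft (g : Fin n → ℕ) (j : Fin n) :
    (mword g false).count (j, true) = 0 := by simp [count_mword]

/-- Balancedness of a word relative to an initial and a final counter valuation. -/
def Bal (g g' : Fin n → ℕ) (v : List (Omega n)) : Prop :=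
  ∀ i : Fin n,
    (∀ p, p <+: v → p.count (i, false) ≤ p.count (i, true) + g i) ∧
    g i + v.count (i, true) = g' i + v.count (i, false)

lemma bal_nil (g : Fin n → ℕ) : Bal g g [] := by
  intro i
  refine ⟨fun p hp => ?_, by simp⟩
  rw [List.prefix_nil.mp hp]
  simp

lemma bal_nil_eq {g g' : Fin n → ℕ} (h : Bal g g' []) : g = g' := by
  funext i
  have := (h i).2
  simpa using this

lemma bal_append {g g₁ g₂ : Fin n → ℕ} {u v : List (Omega n)}
    (h1 : Bal g g₁ u) (h2 : Bal g₁ g₂ v) : Bal g g₂ (u ++ v) := by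
  intro i
  obtain ⟨h1p, h1t⟩ := h1 i
  obtain ⟨h2p, h2t⟩ := h2 i
  constructor
  · intro p hp
    rcases prefix_append_cases hp with hp | ⟨q, hq, rfl⟩
    · exact h1p p hp
    · have hu := h1p u List.prefix_rfl
      have := h2p q hq
      simp only [List.count_append]
      omega
  · simp only [List.count_append]
    omega

lemma bal_step {g a b : Fin n → ℕ} (h : ∀ i, a i ≤ g i) :
    Bal g (fun i => g i - a i + b i) (mword a false ++ mword b true) := by
  intro i
  constructor
  · intro p hp
    rcases prefix_append_cases hp with hp | ⟨q, hq, rfl⟩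
    · have h1 := hp.sublist.count_le (i, false)
      rw [count_mword_ff] at h1
      have := h i
      omega
    · have h2 := hq.sublist.count_le (i, false)
      rw [count_mword_tf] at h2
      have := h i
      simp only [List.count_append, count_mword_ff]
      omega
  · simp only [List.count_append, count_mword_ff, count_mword_tt, count_mword_tf,
      count_mword_ft]
    have := h i
    omega

lemma bal_step_inv {g g' a b : Fin n → ℕ} {rest : List (Omega n)}
    (h : Bal g g' (mword a false ++ (mword b true ++ rest))) :
    (∀ i, a i ≤ g i) ∧ Bal (fun i => g i - a i + b i) g' rest := by
  have hle : ∀ i, a i ≤ g i := by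
    intro i
    have := (h i).1 (mword a false) ((mword a false).prefix_append _)
    simpa using this
  refine ⟨hle, fun i => ⟨fun q hq => ?_, ?_⟩⟩
  · show q.count (i, false) ≤ q.count (i, true) + (g i - a i + b i)
    have hp : mword a false ++ (mword b true ++ q) <+: mword a false ++ (mword b true ++ rest) :=
      (List.prefix_append_right_inj _).2 ((List.prefix_append_right_inj _).2 hq)
    have := (h i).1 _ hp
    simp only [List.count_append, count_mword_ff, count_mword_tt, count_mword_tf,
      count_mword_ft] at this
    have := hle i
    omega
  · have := (h i).2
    simp only [List.count_append, count_mword_ff, count_mword_tt, count_mword_tf,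
      count_mword_ft] at this
    have := hle i
    show (g i - a i + b i) + rest.count (i, true) = g' i + rest.count (i, false)
    omega

lemma c0_like_iff_bal (g₀ g₁ : Fin n → ℕ) (w : List (Omega n)) :
    (∀ i : Fin n,
      (∀ p, p <+: mword g₀ true ++ w ++ mword g₁ false →
        p.count (i, false) ≤ p.count (i, true)) ∧
      (mword g₀ true ++ w ++ mword g₁ false).count (i, true)
        = (mword g₀ true ++ w ++ mword g₁ false).count (i, false))
    ↔ Bal g₀ g₁ w := by
  constructor
  · intro h i
    obtain ⟨h1, h2⟩ := h i
    constructor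
    · intro p hp
      have hpre : mword g₀ true ++ p <+: mword g₀ true ++ w ++ mword g₁ false := by
        rw [List.append_assoc]
        exact (List.prefix_append_right_inj _).2 (hp.trans (w.prefix_append _))
      have := h1 _ hpre
      simp only [List.count_append, count_mword_tt, count_mword_tf] at this
      omega
    · simp only [List.count_append, count_mword_tt, count_mword_tf, count_mword_ff,
        count_mword_ft] at h2
      omega
  · intro h i
    constructor
    · intro p hp
      rw [List.append_assoc] at hp
      rcases prefix_append_cases hp with hp | ⟨q, hq, rfl⟩
      · have h1 := hp.sublist.count_le (i, false)
        rw [count_mword_tf] at h1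
        omega
      · rcases prefix_append_cases hq with hq | ⟨r, hr, rfl⟩
        · have := (h i).1 q hq
          simp only [List.count_append, count_mword_tt, count_mword_tf]
          omega
        · have h2 := hr.sublist.count_le (i, false)
          rw [count_mword_ff] at h2
          have h3 := hr.sublist.count_le (i, true)
          rw [count_mword_ft] at h3
          have := (h i).2
          simp only [List.count_append, count_mword_tt, count_mword_tf]
          omega
    · have := (h i).2
      simp only [List.count_append, count_mword_tt, count_mword_tf, count_mword_ff,
        count_mword_ft]
      omega

end Count

section Petri

open LabelledPetriNet

variable {P T A : Type} {n : ℕ}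

/-- The `Ω`-code of a transition: decrements for `pre`, then increments for `post`. -/
def ocode (e : P ≃ Fin n) (N : LabelledPetriNet P T A) (t : T) : List (Omega n) :=
  mword (fun i => N.pre t (e.symm i)) false ++ mword (fun i => N.post t (e.symm i)) true

/-- The full code of a transition: its (optional) label followed by its `Ω`-code. -/
def codeT (e : P ≃ Fin n) (N : LabelledPetriNet P T A) (t : T) : List (A ⊕ Omega n) :=
  ((N.label t).toList.map Sum.inl) ++ (ocode e N t).map Sum.inr

lemma firing_bal (e : P ≃ Fin n) {N : LabelledPetriNet P T A} {M M' : P → ℕ} {s : List T}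
    (h : N.FiringSeq M s M') :
    Bal (fun i => M (e.symm i)) (fun i => M' (e.symm i)) ((s.map (ocode e N)).flatten) := by
  induction h with
  | nil M => exact bal_nil _
  | @cons M M' t ts henb hseq ih =>
    simp only [List.map_cons, List.flatten_cons]
    exact bal_append (bal_step (fun i => henb (e.symm i))) ih

lemma bal_firing (e : P ≃ Fin n) (N : LabelledPetriNet P T A) (s : List T) :
    ∀ M M' : P → ℕ,
      Bal (fun i => M (e.symm i)) (fun i => M' (e.symm i)) ((s.map (ocode e N)).flatten) →
      N.FiringSeq M s M' := by
  induction s with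
  | nil =>
    intro M M' h
    simp only [List.map_nil, List.flatten_nil] at h
    have hMM : M = M' := by
      funext p
      have := congrFun (bal_nil_eq h) (e p)
      simpa using this
    exact hMM ▸ .nil M
  | cons t s ih =>
    intro M M' h
    simp only [List.map_cons, List.flatten_cons] at h
    rw [ocode, List.append_assoc] at h
    obtain ⟨hle, hb⟩ := bal_step_inv h
    refine .cons (fun p => ?_) (ih _ _ hb)
    have := hle (e p)
    simpa using this

@[simp] lemma eraseOmega_inr (l : List (Omega n)) :
    eraseOmega (l.map Sum.inr : List (A ⊕ Omega n)) = [] := by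
  simp [eraseOmega, List.filterMap_map, Function.comp_def]

@[simp] lemma eraseSigma_inr (l : List (Omega n)) :
    eraseSigma (l.map Sum.inr : List (A ⊕ Omega n)) = l := by
  simp [eraseSigma, List.filterMap_map, Function.comp_def]

@[simp] lemma eraseOmega_inl (l : List A) :
    eraseOmega (l.map Sum.inl : List (A ⊕ Omega n)) = l := by
  simp [eraseOmega, List.filterMap_map, Function.comp_def]

@[simp] lemma eraseSigma_inl (l : List A) :
    eraseSigma (l.map Sum.inl : List (A ⊕ Omega n)) = [] := by
  simp [eraseSigma, List.filterMap_map, Function.comp_def]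

lemma eraseOmega_append (u v : List (A ⊕ Omega n)) :
    eraseOmega (u ++ v) = eraseOmega u ++ eraseOmega v :=
  List.filterMap_append

lemma eraseSigma_append (u v : List (A ⊕ Omega n)) :
    eraseSigma (u ++ v) = eraseSigma u ++ eraseSigma v :=
  List.filterMap_append

@[simp] lemma eraseOmega_codeT (e : P ≃ Fin n) (N : LabelledPetriNet P T A) (t : T) :
    eraseOmega (codeT e N t) = (N.label t).toList := by
  rw [codeT, eraseOmega_append]; simp

@[simp] lemma eraseSigma_codeT (e : P ≃ Fin n) (N : LabelledPetriNet P T A) (t : T) :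
    eraseSigma (codeT e N t) = ocode e N t := by
  rw [codeT, eraseSigma_append]; simp

lemma labelWord_cons (N : LabelledPetriNet P T A) (t : T) (s : List T) :
    N.labelWord (t :: s) = (N.label t).toList ++ N.labelWord s := by
  rw [LabelledPetriNet.labelWord, LabelledPetriNet.labelWord, List.filterMap_cons]
  cases N.label t <;> simp

lemma eraseOmega_code (e : P ≃ Fin n) (N : LabelledPetriNet P T A) (s : List T) :
    eraseOmega ((s.map (codeT e N)).flatten) = N.labelWord s := by
  induction s with
  | nil => simp [eraseOmega, labelWord]
  | cons t s ih =>
    rw [List.map_cons, List.flatten_cons, eraseOmega_append, ih, eraseOmega_codeT,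
      labelWord_cons]

lemma eraseSigma_code (e : P ≃ Fin n) (N : LabelledPetriNet P T A) (s : List T) :
    eraseSigma ((s.map (codeT e N)).flatten) = (s.map (ocode e N)).flatten := by
  induction s with
  | nil => simp [eraseSigma]
  | cons t s ih =>
    rw [List.map_cons, List.flatten_cons, eraseSigma_append, ih, eraseSigma_codeT,
      List.map_cons, List.flatten_cons]

end Petri

/-- Every terminal Petri net language is generated by a regular expression controlled by
balanced ([0]-counter) semaphores. -/
theorem terminal_petri_lang_is_recbs_lang {A : Type} [Fintype A] {P T : Type}
    [Fintype P] [Fintype T] (N : LabelledPetriNet P T A) (M₀ Mf : P → ℕ) :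
    ∃ (n : ℕ) (E : RegularExpression (A ⊕ Omega n)),
      N.terminalLang M₀ Mf =
        { w | ∃ x ∈ E.matches', eraseOmega x = w ∧ eraseSigma x ∈ C0 n } := by
  classical
  let n := Fintype.card P
  let e : P ≃ Fin n := Fintype.equivFin P
  let init : List (A ⊕ Omega n) := (mword (fun i => M₀ (e.symm i)) true).map Sum.inr
  let fin : List (A ⊕ Omega n) := (mword (fun i => Mf (e.symm i)) false).map Sum.inr
  refine ⟨n, rword init *
      (rsum (((Finset.univ.toList : List T).map (codeT e N)).map rword)).star * rword fin, ?_⟩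
  ext w
  constructor
  · rintro ⟨s, hFS, rfl⟩
    refine ⟨init ++ (s.map (codeT e N)).flatten ++ fin, ?_, ?_, ?_⟩
    · refine (mem_big _ _ _ _).2 ⟨s.map (codeT e N), fun y hy => ?_, rfl⟩
      obtain ⟨t, _, rfl⟩ := List.mem_map.1 hy
      exact List.mem_map_of_mem (Finset.mem_toList.2 (Finset.mem_univ t))
    · simp [init, fin, eraseOmega_append, eraseOmega_code]
    · have hbal := firing_bal e hFS
      have hx : eraseSigma (init ++ (s.map (codeT e N)).flatten ++ fin)
          = mword (fun i => M₀ (e.symm i)) true ++ (s.map (ocode e N)).flatten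
            ++ mword (fun i => Mf (e.symm i)) false := by
        simp [init, fin, eraseSigma_append, eraseSigma_code]
      rw [hx]
      exact (c0_like_iff_bal _ _ _).2 hbal
  · rintro ⟨x, hx, rfl, hC⟩
    rw [mem_big] at hx
    obtain ⟨L, hL, rfl⟩ := hx
    obtain ⟨s, rfl⟩ := exists_list_map (f := codeT e N) (fun y hy => by
      obtain ⟨t, _, rfl⟩ := List.mem_map.1 (hL y hy)
      exact ⟨t, rfl⟩)
    have hx : eraseSigma (init ++ (s.map (codeT e N)).flatten ++ fin)
        = mword (fun i => M₀ (e.symm i)) true ++ (s.map (ocode e N)).flatten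
          ++ mword (fun i => Mf (e.symm i)) false := by
      simp [init, fin, eraseSigma_append, eraseSigma_code]
    rw [hx] at hC
    refine ⟨s, bal_firing e N s M₀ Mf ((c0_like_iff_bal _ _ _).1 hC), ?_⟩
    simp [init, fin, eraseOmega_append, eraseOmega_code]
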